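/- Abel's binomial identity: for all real x, y, z and every natural number n, (x+y)^n = ∑_{i=0}^{n} binom(n,i) · x · (x - i z)^{i-1} · (y + i z)^{n-i}, provided x ≠ i z for all 0 ≤ i ≤ n so that the negative power (x-iz)^{i-1} is defined for i = 0 (where (x-0·z)^{-1}·x = 1 after combining with the leading factor x). -/

import Mathlib

open Finset

noncomputable def Eaux (z : ℝ) (m : ℕ) (x y : ℝ) : ℝ :=
  ∑ k ∈ Finset.range (m + 1), (m.choose k : ℝ) * (x - k * z) ^ k * (y + k * z) ^ (m - k)

lemma Eaux_shift (z : ℝ) : ∀ (m : ℕ) (x y t : ℝ),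
    Eaux z m (x - t * z) (y + t * z) = Eaux z m x y := by
  intro m
  induction m with
  | zero => intro x y t; simp [Eaux]
  | succ m ih =>
    intro x y t
    set f : ℝ → ℝ := fun s => Eaux z (m + 1) (x - s * z) (y + s * z) with hf
    have hd : ∀ s : ℝ, HasDerivAt f 0 s := by
      intro s
      have hterm : ∀ k ∈ Finset.range (m + 2),
          HasDerivAt (fun u : ℝ => ((m+1).choose k : ℝ) * ((x - u * z) - k * z) ^ k *
              ((y + u * z) + k * z) ^ (m + 1 - k))
            (((m+1).choose k : ℝ) *
              (((k : ℝ) * ((x - s * z) - k * z) ^ (k - 1) * (-z)) * ((y + s * z) + k * z) ^ (m + 1 - k) +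
               ((x - s * z) - k * z) ^ k * (((m + 1 - k : ℕ) : ℝ) * ((y + s * z) + k * z) ^ (m + 1 - k - 1) * z))) s := by
        intro k _
        have hA : HasDerivAt (fun u : ℝ => (x - u * z) - k * z) (-z) s := by
          simpa using (((hasDerivAt_id s).mul_const z).const_sub x).sub_const ((k : ℝ) * z)
        have hB : HasDerivAt (fun u : ℝ => (y + u * z) + k * z) z s := by
          simpa using (((hasDerivAt_id s).mul_const z).const_add y).add_const ((k : ℝ) * z)
        have := ((hA.pow k).mul (hB.pow (m + 1 - k))).const_mul (((m+1).choose k : ℝ))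
        simpa [mul_assoc, mul_left_comm, mul_comm] using this
      have hsum := HasDerivAt.fun_sum hterm
      have hzero : (∑ k ∈ Finset.range (m + 2),
          ((m+1).choose k : ℝ) *
            (((k : ℝ) * ((x - s * z) - k * z) ^ (k - 1) * (-z)) * ((y + s * z) + k * z) ^ (m + 1 - k) +
             ((x - s * z) - k * z) ^ k * (((m + 1 - k : ℕ) : ℝ) * ((y + s * z) + k * z) ^ (m + 1 - k - 1) * z))) = 0 := by
        have key : ∀ k ∈ Finset.range (m + 2),
            ((m+1).choose k : ℝ) *
              (((k : ℝ) * ((x - s * z) - k * z) ^ (k - 1) * (-z)) * ((y + s * z) + k * z) ^ (m + 1 - k) +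
               ((x - s * z) - k * z) ^ k * (((m + 1 - k : ℕ) : ℝ) * ((y + s * z) + k * z) ^ (m + 1 - k - 1) * z)) =
            (((m+1).choose k : ℝ) * (((k : ℝ) * ((x - s * z) - k * z) ^ (k - 1) * (-z)) * ((y + s * z) + k * z) ^ (m + 1 - k))) +
            (((m+1).choose k : ℝ) * (((x - s * z) - k * z) ^ k * (((m + 1 - k : ℕ) : ℝ) * ((y + s * z) + k * z) ^ (m + 1 - k - 1) * z))) := by
          intro k _; ring
        rw [Finset.sum_congr rfl key, Finset.sum_add_distrib]
        have hP : (∑ k ∈ Finset.range (m + 2),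
            (((m+1).choose k : ℝ) * (((k : ℝ) * ((x - s * z) - k * z) ^ (k - 1) * (-z)) * ((y + s * z) + k * z) ^ (m + 1 - k)))) =
            -((((m:ℕ):ℝ) + 1) * z * Eaux z m ((x - s * z) - z) ((y + s * z) + z)) := by
          rw [Finset.sum_range_succ']
          rw [Eaux, Finset.mul_sum, ← Finset.sum_neg_distrib]
          simp only [Nat.cast_zero, zero_mul, mul_zero, add_zero]
          apply Finset.sum_congr rfl
          intro j hj
          have hc : ((m:ℕ):ℝ) + 1 = (((m+1:ℕ)):ℝ) := by push_cast; ring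
          have hcoef : (((m+1).choose (j+1) : ℕ) : ℝ) * ((j:ℝ) + 1) = (((m+1:ℕ)):ℝ) * ((m.choose j : ℕ) : ℝ) := by
            have h2 : (m+1) * m.choose j = (m+1).choose (j+1) * (j+1) := Nat.add_one_mul_choose_eq m j
            have h3 : (((m+1) * m.choose j : ℕ) : ℝ) = (((m+1).choose (j+1) * (j+1) : ℕ) : ℝ) := by
              exact_mod_cast h2
            push_cast at h3 ⊢
            linear_combination -h3
          have e1 : (j + 1) - 1 = j := rfl
          have e2 : m + 1 - (j + 1) = m - j := by omega
          rw [e1, e2]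
          push_cast at hcoef ⊢
          linear_combination (-z) * ((x - s * z - ((j:ℝ) + 1) * z) ^ j * ((y + s * z + ((j:ℝ) + 1) * z)) ^ (m - j)) * hcoef
        have hQ : (∑ k ∈ Finset.range (m + 2),
            (((m+1).choose k : ℝ) * (((x - s * z) - k * z) ^ k * (((m + 1 - k : ℕ) : ℝ) * ((y + s * z) + k * z) ^ (m + 1 - k - 1) * z)))) =
            (((m:ℕ):ℝ) + 1) * z * Eaux z m (x - s * z) (y + s * z) := by
          rw [Finset.sum_range_succ]
          simp only [Nat.sub_self, Nat.cast_zero, zero_mul, mul_zero, add_zero]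
          rw [Eaux, Finset.mul_sum]
          apply Finset.sum_congr rfl
          intro k hk
          have hk' : k ≤ m := by simpa [Nat.lt_succ_iff] using hk
          have e2 : m + 1 - k = (m - k) + 1 := by omega
          have e3 : m + 1 - k - 1 = m - k := by omega
          have hcoef : (((m+1).choose k : ℕ) : ℝ) * (((m-k:ℕ)) + 1 : ℝ) = (((m+1:ℕ)):ℝ) * ((m.choose k : ℕ) : ℝ) := by
            have h2 : m.choose k * (m + 1) = (m+1).choose k * (m + 1 - k) := Nat.choose_mul_succ_eq m k
            rw [e2] at h2
            have h3 : ((m.choose k * (m + 1) : ℕ) : ℝ) = (((m+1).choose k * (m - k + 1) : ℕ) : ℝ) := by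
              exact_mod_cast h2
            push_cast at h3 ⊢
            linear_combination -h3
          rw [e3, e2]
          push_cast at hcoef ⊢
          linear_combination z * ((x - s * z - (k:ℝ) * z) ^ k * ((y + s * z + (k:ℝ) * z)) ^ (m - k)) * hcoef
        rw [hP, hQ]
        have hshift : Eaux z m ((x - s * z) - z) ((y + s * z) + z) = Eaux z m (x - s * z) (y + s * z) := by
          have := ih (x - s * z) (y + s * z) 1
          simpa using this
        rw [hshift]; ring
      have : f = fun u : ℝ => ∑ k ∈ Finset.range (m + 2),
          ((m+1).choose k : ℝ) * ((x - u * z) - k * z) ^ k * ((y + u * z) + k * z) ^ (m + 1 - k) := by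
        funext u; simp [hf, Eaux]
      rw [this]
      exact hzero ▸ hsum
    have hconst := is_const_of_deriv_eq_zero (fun s => (hd s).differentiableAt)
      (fun s => (hd s).deriv) t 0
    have h0 : f 0 = Eaux z (m + 1) x y := by simp [hf]
    rw [← h0]; exact hconst

lemma abel_aux (z : ℝ) : ∀ (n : ℕ) (x y : ℝ),
    ∑ j ∈ Finset.range n, (n.choose (j+1) : ℝ) * x * (x - (j+1) * z) ^ j * (y + (j+1) * z) ^ (n - (j+1))
      = (x + y) ^ n - y ^ n := by
  intro n
  induction n with
  | zero => intro x y; simp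
  | succ n ih =>
    intro x y
    have pascal : ∀ j ∈ Finset.range (n+1),
        ((n+1).choose (j+1) : ℝ) * x * (x - (j+1) * z) ^ j * (y + (j+1) * z) ^ (n + 1 - (j+1)) =
        ((n.choose (j+1) : ℝ) * x * (x - (j+1) * z) ^ j * (y + (j+1) * z) ^ (n - j)) +
        ((n.choose j : ℝ) * x * (x - (j+1) * z) ^ j * (y + (j+1) * z) ^ (n - j)) := by
      intro j _
      have e : n + 1 - (j+1) = n - j := by omega
      have hp : (((n+1).choose (j+1) : ℕ) : ℝ) = ((n.choose j : ℕ) : ℝ) + ((n.choose (j+1) : ℕ) : ℝ) := by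
        exact_mod_cast Nat.choose_succ_succ n j
      rw [e, hp]; ring
    rw [Finset.sum_congr rfl pascal, Finset.sum_add_distrib]
    have hQ : (∑ j ∈ Finset.range (n+1),
        ((n.choose j : ℝ) * x * (x - (j+1) * z) ^ j * (y + (j+1) * z) ^ (n - j))) =
        x * Eaux z n (x - z) (y + z) := by
      rw [Eaux, Finset.mul_sum]
      apply Finset.sum_congr rfl
      intro j _
      -- push_cast not needed
      ring
    have hshift : Eaux z n (x - z) (y + z) = Eaux z n x y := by
      have := Eaux_shift z n x y 1
      simpa using this
    have hE : Eaux z n x y =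
        (∑ j ∈ Finset.range n, ((n.choose (j+1) : ℝ) * (x - (j+1) * z) ^ (j+1) * (y + (j+1) * z) ^ (n - (j+1))))
          + y ^ n := by
      rw [Eaux, Finset.sum_range_succ']
      simp
    have hsplit : ∀ j ∈ Finset.range n,
        ((n.choose (j+1) : ℝ) * x * (x - (j+1) * z) ^ j * (y + (j+1) * z) ^ (n - j)) =
        (x + y) * ((n.choose (j+1) : ℝ) * x * (x - (j+1) * z) ^ j * (y + (j+1) * z) ^ (n - (j+1)))
          - x * ((n.choose (j+1) : ℝ) * (x - (j+1) * z) ^ (j+1) * (y + (j+1) * z) ^ (n - (j+1))) := by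
      intro j hj
      have hj' : j < n := Finset.mem_range.mp hj
      have e : n - j = (n - (j+1)) + 1 := by omega
      rw [e, pow_succ]
      ring
    have hP : (∑ j ∈ Finset.range (n+1),
        ((n.choose (j+1) : ℝ) * x * (x - (j+1) * z) ^ j * (y + (j+1) * z) ^ (n - j))) =
        (x + y) * ((x + y) ^ n - y ^ n) - x * (Eaux z n x y - y ^ n) := by
      rw [Finset.sum_range_succ, Nat.choose_succ_self]
      simp only [Nat.cast_zero, zero_mul, add_zero]
      rw [Finset.sum_congr rfl hsplit, Finset.sum_sub_distrib, ← Finset.mul_sum, ← Finset.mul_sum,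
        ih x y, hE]
      ring
    rw [hP, hQ, hshift]
    ring

theorem abel_binomial_identity (x y z : ℝ) (n : ℕ) (h : ∀ i : ℕ, i ≤ n → x ≠ i * z) :
    (x + y) ^ n =
      ∑ i ∈ Finset.range (n + 1),
        (n.choose i : ℝ) * x * (x - i * z) ^ ((i : ℤ) - 1) * (y + i * z) ^ (n - i) := by
  have hx : x ≠ 0 := by
    have := h 0 (Nat.zero_le n)
    simpa using this
  rw [Finset.sum_range_succ']
  have h0 : (n.choose 0 : ℝ) * x * (x - (0:ℕ) * z) ^ (((0:ℕ) : ℤ) - 1) * (y + (0:ℕ) * z) ^ (n - 0)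
      = y ^ n := by
    simp [zpow_neg, mul_inv_cancel₀ hx]
  rw [h0]
  have hterm : ∀ i ∈ Finset.range n,
      (n.choose (i+1) : ℝ) * x * (x - ((i+1 : ℕ)) * z) ^ ((((i+1:ℕ)) : ℤ) - 1) * (y + ((i+1:ℕ)) * z) ^ (n - (i+1))
      = (n.choose (i+1) : ℝ) * x * (x - ((i+1:ℕ)) * z) ^ i * (y + ((i+1:ℕ)) * z) ^ (n - (i+1)) := by
    intro i _
    have e : (((i+1:ℕ)) : ℤ) - 1 = ((i : ℕ) : ℤ) := by push_cast; ring
    rw [e, zpow_natCast]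
  rw [Finset.sum_congr rfl hterm]
  have := abel_aux z n x y
  push_cast at this ⊢
  rw [this]
  ring
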